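/- If G is a randomly k-dimensional graph of order n that is not a complete graph, then the maximum degree of G satisfies Δ(G) ≤ n - 2. -/

import Mathlib

open SimpleGraph

/-- `W` is a resolving set for `G`: distinct vertices have distinct
metric representations with respect to `W`. -/
def IsResolvingSet {V : Type*} (G : SimpleGraph V) (W : Finset V) : Prop :=
  ∀ u v : V, u ≠ v → ∃ w ∈ W, G.dist u w ≠ G.dist v w

/-- The metric dimension `β(G)`: minimum cardinality of a resolving set. -/
noncomputable def metricDim {V : Type*} [Fintype V] (G : SimpleGraph V) : ℕ :=
  sInf {k | ∃ W : Finset V, W.card = k ∧ IsResolvingSet G W}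

/-- A (metric) basis of `G`: a resolving set of minimum cardinality. -/
def IsMetricBasis {V : Type*} [Fintype V] (G : SimpleGraph V) (B : Finset V) : Prop :=
  IsResolvingSet G B ∧ B.card = metricDim G

/-- The resolving number `res(G)`: the minimum `k` such that every `k`-set of
vertices is a resolving set. -/
noncomputable def resolvingNumber {V : Type*} [Fintype V] (G : SimpleGraph V) : ℕ :=
  sInf {k | ∀ W : Finset V, W.card = k → IsResolvingSet G W}

/-- The basis number `bas(G)`: the maximum `r` such that every `r`-set of
vertices is contained in some basis. -/
noncomputable def basisNumber {V : Type*} [Fintype V] (G : SimpleGraph V) : ℕ :=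
  sSup {r | r ≤ Fintype.card V ∧
    ∀ S : Finset V, S.card = r → ∃ B : Finset V, S ⊆ B ∧ IsMetricBasis G B}

/-- `G` is randomly `k`-dimensional: `β(G) = k` and every `k`-set of vertices
is a basis of `G`. -/
def RandomlyDimensional {V : Type*} [Fintype V] (G : SimpleGraph V) (k : ℕ) : Prop :=
  metricDim G = k ∧ ∀ W : Finset V, W.card = k → IsMetricBasis G W

theorem randomlyDimensional_maxDegree_le {V : Type*} [Fintype V] (G : SimpleGraph V)
    [DecidableRel G.Adj] (hG : G.Connected) (k : ℕ) (h : RandomlyDimensional G k)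
    (hne : G ≠ ⊤) : G.maxDegree ≤ Fintype.card V - 2 := by
  classical
  by_contra hmax
  push_neg at hmax
  -- a non-adjacent pair u ≠ w
  obtain ⟨u, w, huw, hna⟩ : ∃ u w : V, u ≠ w ∧ ¬ G.Adj u w := by
    by_contra hc
    push_neg at hc
    exact hne (by
      ext x y
      simp only [top_adj]
      exact ⟨fun h' => h'.ne, fun h' => hc x y h'⟩)
  have hnV : Nonempty V := ⟨u⟩
  -- a vertex v of maximum degree; its degree is n - 1
  obtain ⟨v, hv⟩ := G.exists_maximal_degree_vertex
  have hn2 : 2 ≤ Fintype.card V := by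
    have : ({u, w} : Finset V).card = 2 := by simp [huw]
    calc 2 = ({u, w} : Finset V).card := this.symm
      _ ≤ Fintype.card V := by simpa using Finset.card_le_univ ({u, w} : Finset V)
  have hdegv : G.degree v = Fintype.card V - 1 := by
    have h1 : G.degree v < Fintype.card V := G.degree_lt_card_verts v
    rw [hv] at hmax
    omega
  have hnbr : G.neighborFinset v = Finset.univ.erase v := by
    apply Finset.eq_of_subset_of_card_le
    · intro x hx
      rw [Finset.mem_erase]
      exact ⟨((G.mem_neighborFinset v x).mp hx).ne', Finset.mem_univ x⟩
    · rw [Finset.card_erase_of_mem (Finset.mem_univ v), G.card_neighborFinset_eq_degree,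
        hdegv, Finset.card_univ]
  have hAdj : ∀ x : V, x ≠ v → G.Adj v x := by
    intro x hx
    rw [← G.mem_neighborFinset, hnbr, Finset.mem_erase]
    exact ⟨hx, Finset.mem_univ x⟩
  have huv : u ≠ v := by rintro rfl; exact hna (hAdj w (Ne.symm huw))
  have hwv : w ≠ v := by rintro rfl; exact hna ((hAdj u huv).symm)
  have hn3 : 3 ≤ Fintype.card V := by
    have : ({u, w, v} : Finset V).card = 3 := by
      rw [Finset.card_insert_of_notMem (by simp [huw, huv]),
        Finset.card_insert_of_notMem (by simp [hwv])]
      simp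
    calc 3 = ({u, w, v} : Finset V).card := this.symm
      _ ≤ Fintype.card V := by simpa using Finset.card_le_univ ({u, w, v} : Finset V)
  -- distance facts
  have hpos : ∀ x y : V, x ≠ y → 0 < G.dist x y := fun x y hxy =>
    hG.pos_dist_of_ne hxy
  have hd1 : ∀ {x y : V}, G.Adj x y → G.dist x y = 1 := fun hadj =>
    SimpleGraph.dist_eq_one_iff_adj.mpr hadj
  have hd2 : ∀ x y : V, x ≠ y → ¬ G.Adj x y → G.dist x y = 2 := by
    intro x y hxy hnadj
    have hxv : x ≠ v := by rintro rfl; exact hnadj (hAdj y (Ne.symm hxy))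
    have hyv : y ≠ v := by rintro rfl; exact hnadj ((hAdj x hxv).symm)
    have hle : G.dist x y ≤ 2 := by
      have := SimpleGraph.dist_le (SimpleGraph.Walk.cons ((hAdj x hxv).symm)
        (SimpleGraph.Walk.cons (hAdj y hyv) SimpleGraph.Walk.nil))
      simpa using this
    have h1 : G.dist x y ≠ 1 := fun hc =>
      hnadj (SimpleGraph.dist_eq_one_iff_adj.mp hc)
    have h0 := hpos x y hxy
    omega
  -- randomly k-dimensional facts
  have hMin : ∀ W : Finset V, IsResolvingSet G W → k ≤ W.card := by
    intro W hW
    have : metricDim G ≤ W.card := Nat.sInf_le ⟨W, rfl, hW⟩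
    rw [h.1] at this
    exact this
  have hRes : ∀ W : Finset V, W.card = k → IsResolvingSet G W :=
    fun W hW => (h.2 W hW).1
  -- k ≥ 2
  have hk1 : 2 ≤ k := by
    by_contra hk
    push_neg at hk
    interval_cases k
    · obtain ⟨y, hy, -⟩ := hRes ∅ rfl u w huw
      exact absurd hy (Finset.notMem_empty y)
    · obtain ⟨y, hy, hyd⟩ := hRes {v} (Finset.card_singleton v) u w huw
      rw [Finset.mem_singleton] at hy
      subst hy
      exact hyd (by rw [hd1 (hAdj u huv).symm, hd1 (hAdj w hwv).symm])
  -- k ≤ n - 2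
  have hkn : k ≤ Fintype.card V - 2 := by
    have hres : IsResolvingSet G ((Finset.univ.erase v).erase u) := by
      intro a b hab
      by_cases ha : a ∈ (Finset.univ.erase v).erase u
      · exact ⟨a, ha, by rw [SimpleGraph.dist_self]; exact (hpos b a (Ne.symm hab)).ne⟩
      · by_cases hb : b ∈ (Finset.univ.erase v).erase u
        · exact ⟨b, hb, by rw [SimpleGraph.dist_self]; exact (hpos a b hab).ne'⟩
        · have hmem : ∀ c : V, c ∉ (Finset.univ.erase v).erase u → c = u ∨ c = v := by
            intro c hc
            by_contra hcc
            push_neg at hcc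
            apply hc
            rw [Finset.mem_erase, Finset.mem_erase]
            exact ⟨hcc.1, hcc.2, Finset.mem_univ c⟩
          have hwmem : w ∈ (Finset.univ.erase v).erase u := by
            rw [Finset.mem_erase, Finset.mem_erase]
            exact ⟨Ne.symm huw, hwv, Finset.mem_univ w⟩
          refine ⟨w, hwmem, ?_⟩
          have dvw : G.dist v w = 1 := hd1 (hAdj w hwv)
          have duw : G.dist u w = 2 := hd2 u w huw hna
          rcases hmem a ha with rfl | rfl <;> rcases hmem b hb with rfl | rfl
          · exact absurd rfl hab
          · rw [duw, dvw]; omega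
          · rw [duw, dvw]; omega
          · exact absurd rfl hab
    have hcard : ((Finset.univ.erase v).erase u).card = Fintype.card V - 2 := by
      rw [Finset.card_erase_of_mem (by rw [Finset.mem_erase]; exact ⟨huv, Finset.mem_univ u⟩),
        Finset.card_erase_of_mem (Finset.mem_univ v), Finset.card_univ]
      omega
    have := hMin _ hres
    omega
  -- Lemma (i)
  have hI : ∀ S : Finset V, S.card = k - 1 → v ∉ S →
      ∀ a b : V, a ≠ b → a ≠ v → b ≠ v → ∃ s ∈ S, G.dist a s ≠ G.dist b s := by
    intro S hS hvS a b hab hav hbv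
    have hc : (insert v S).card = k := by
      rw [Finset.card_insert_of_notMem hvS, hS]; omega
    obtain ⟨y, hy, hyd⟩ := hRes _ hc a b hab
    rcases Finset.mem_insert.mp hy with rfl | hyS
    · exact absurd (by rw [hd1 (hAdj a hav).symm, hd1 (hAdj b hbv).symm]) hyd
    · exact ⟨y, hyS, hyd⟩
  -- Lemma (ii)
  have hII : ∀ S : Finset V, S.card = k - 1 → v ∉ S →
      ∃ a : V, a ∉ S ∧ a ≠ v ∧ ∀ s ∈ S, G.Adj a s := by
    intro S hS hvS
    have hnres : ¬ IsResolvingSet G S := by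
      intro hr
      have := hMin S hr
      omega
    unfold IsResolvingSet at hnres
    push_neg at hnres
    obtain ⟨a, b, hab, hall⟩ := hnres
    obtain ⟨c, hcv, hcd⟩ : ∃ c : V, c ≠ v ∧ ∀ s ∈ S, G.dist c s = G.dist v s := by
      have hvab : a = v ∨ b = v := by
        by_contra hc
        push_neg at hc
        obtain ⟨s, hs, hsd⟩ := hI S hS hvS a b hab hc.1 hc.2
        exact hsd (hall s hs)
      rcases hvab with rfl | rfl
      · exact ⟨b, Ne.symm hab, fun s hs => (hall s hs).symm⟩
      · exact ⟨a, hab, hall⟩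
    refine ⟨c, ?_, hcv, ?_⟩
    · intro hcS
      have h1 := hcd c hcS
      rw [SimpleGraph.dist_self, hd1 (hAdj c hcv)] at h1
      exact absurd h1 (by omega)
    · intro s hs
      have hsv : s ≠ v := fun hc => hvS (hc ▸ hs)
      have h1 : G.dist c s = 1 := by
        rw [hcd s hs]
        exact hd1 (hAdj s hsv)
      have hcs : c ≠ s := by
        rintro rfl
        rw [SimpleGraph.dist_self] at h1
        omega
      by_contra hnadj
      rw [hd2 c s hcs hnadj] at h1
      omega
  -- degree bound for non-v vertices
  have hDeg : ∀ x : V, x ≠ v → (G.neighborFinset x).card ≤ k := by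
    intro x hxv
    by_contra hbig
    push_neg at hbig
    have hcard2 : k ≤ ((G.neighborFinset x).erase v).card := by
      have := Finset.pred_card_le_card_erase (s := G.neighborFinset x) (a := v)
      omega
    obtain ⟨W, hWsub, hWcard⟩ := Finset.exists_subset_card_eq hcard2
    obtain ⟨y, hy, hyd⟩ := hRes W hWcard v x (Ne.symm hxv)
    have hyW := hWsub hy
    rw [Finset.mem_erase] at hyW
    have hyadj : G.Adj x y := (G.mem_neighborFinset x y).mp hyW.2
    exact hyd (by rw [hd1 (hAdj y hyW.1), hd1 hyadj])
  -- the set N of non-resolvers of (u,w)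
  set N : Finset V := Finset.univ.filter
    (fun z => z ≠ u ∧ z ≠ v ∧ z ≠ w ∧ G.dist u z = G.dist w z) with hNdef
  have hmemN : ∀ z : V, z ∈ N ↔
      (z ≠ u ∧ z ≠ v ∧ z ≠ w ∧ G.dist u z = G.dist w z) := by
    intro z; simp [hNdef]
  have hNu : u ∉ N := fun hc => (((hmemN u).mp hc).1) rfl
  have hNv : v ∉ N := fun hc => (((hmemN v).mp hc).2.1) rfl
  have hNw : w ∉ N := fun hc => (((hmemN w).mp hc).2.2.1) rfl
  have hNadj : ∀ a : V, a ≠ v → G.Adj a u → G.Adj a w → a ∈ N := by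
    intro a hav h1 h2
    rw [hmemN]
    exact ⟨h1.ne, hav, h2.ne, by rw [hd1 h1.symm, hd1 h2.symm]⟩
  have hNcard : N.card ≤ k - 2 := by
    by_contra hbig
    push_neg at hbig
    obtain ⟨S, hSsub, hScard⟩ := Finset.exists_subset_card_eq (s := N) (n := k - 1) (by omega)
    have hvS : v ∉ S := fun hc => hNv (hSsub hc)
    obtain ⟨s, hs, hsd⟩ := hI S hScard hvS u w huw huv hwv
    exact hsd (((hmemN s).mp (hSsub hs)).2.2.2)
  rcases eq_or_lt_of_le hk1 with hk2 | hk3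
  · -- case k = 2
    have hNempty : N = ∅ := Finset.card_eq_zero.mp (by omega)
    obtain ⟨x, hx⟩ : ∃ x : V, x ∉ ({u, v, w} : Finset V) := by
      by_contra hc
      push_neg at hc
      have : Fintype.card V ≤ ({u, v, w} : Finset V).card := by
        rw [← Finset.card_univ]
        exact Finset.card_le_card (fun y _ => hc y)
      have h3 : ({u, v, w} : Finset V).card ≤ 3 := by
        apply le_trans (Finset.card_insert_le _ _)
        have := Finset.card_insert_le v ({w} : Finset V)
        simp at this ⊢
        omega
      omega
    simp only [Finset.mem_insert, Finset.mem_singleton] at hx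
    push_neg at hx
    obtain ⟨hxu, hxv, hxw⟩ := hx
    have hxN : x ∉ N := hNempty ▸ Finset.notMem_empty x
    by_cases hxu2 : G.Adj x u
    · have hxw2 : ¬ G.Adj x w := fun hadj => hxN (hNadj x hxv hxu2 hadj)
      obtain ⟨s, hs, hsd⟩ := hI {w} (by rw [Finset.card_singleton]; omega)
        (by simp [Ne.symm hwv]) x u hxu hxv huv
      rw [Finset.mem_singleton] at hs
      exact hsd (by rw [hs, hd2 x w hxw hxw2, hd2 u w huw hna])
    · obtain ⟨s, hs, hsd⟩ := hI {u} (by rw [Finset.card_singleton]; omega)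
        (by simp [Ne.symm huv]) x w hxw hxv hwv
      rw [Finset.mem_singleton] at hs
      exact hsd (by rw [hs, hd2 x u hxu hxu2, hd2 w u (Ne.symm huw) (fun hc => hna hc.symm)])
  · -- case k ≥ 3
    have hNlow : k - 2 ≤ N.card := by
      by_contra hlow
      push_neg at hlow
      have hbase_sub : insert u (insert w N) ⊆ Finset.univ.erase v := by
        intro y hy
        rw [Finset.mem_erase]
        refine ⟨?_, Finset.mem_univ y⟩
        rcases Finset.mem_insert.mp hy with rfl | hy2
        · exact huv
        · rcases Finset.mem_insert.mp hy2 with rfl | hy3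
          · exact hwv
          · exact ((hmemN y).mp hy3).2.1
      have hbase_card : (insert u (insert w N)).card ≤ k - 1 := by
        have h1 := Finset.card_insert_le u (insert w N)
        have h2 := Finset.card_insert_le w N
        omega
      have hcard_t : k - 1 ≤ (Finset.univ.erase v).card := by
        rw [Finset.card_erase_of_mem (Finset.mem_univ v), Finset.card_univ]
        omega
      obtain ⟨S, hS1, hS2, hS3⟩ :=
        Finset.exists_subsuperset_card_eq hbase_sub hbase_card hcard_t
      have hvS : v ∉ S := fun hc => by
        have := hS2 hc
        rw [Finset.mem_erase] at this
        exact this.1 rfl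
      obtain ⟨a, haS, hav, hadj⟩ := hII S hS3 hvS
      have hau : G.Adj a u := hadj u (hS1 (Finset.mem_insert_self u _))
      have haw : G.Adj a w := hadj w
        (hS1 (Finset.mem_insert_of_mem (Finset.mem_insert_self w N)))
      exact haS (hS1 (Finset.mem_insert_of_mem
        (Finset.mem_insert_of_mem (hNadj a hav hau haw))))
    have hNcard' : N.card = k - 2 := le_antisymm hNcard hNlow
    obtain ⟨z, hzN⟩ : N.Nonempty := Finset.card_pos.mp (by omega)
    obtain ⟨hzu, hzv, hzw, hzd⟩ := (hmemN z).mp hzN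
    -- the set S_z
    have hwNe : w ∉ N.erase z := fun hc => hNw (Finset.erase_subset z N hc)
    have huNe : u ∉ insert w (N.erase z) := by
      rw [Finset.mem_insert]
      push_neg
      exact ⟨huw, fun hc => hNu (Finset.erase_subset z N hc)⟩
    have hSz_card : (insert u (insert w (N.erase z))).card = k - 1 := by
      rw [Finset.card_insert_of_notMem huNe, Finset.card_insert_of_notMem hwNe,
        Finset.card_erase_of_mem hzN, hNcard']
      omega
    have hvSz : v ∉ insert u (insert w (N.erase z)) := by
      rw [Finset.mem_insert, Finset.mem_insert]
      push_neg
      exact ⟨Ne.symm huv, Ne.symm hwv, fun hc => hNv (Finset.erase_subset z N hc)⟩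
    obtain ⟨a, haSz, hav, hadjz⟩ := hII _ hSz_card hvSz
    have hau : G.Adj a u := hadjz u (Finset.mem_insert_self u _)
    have haw : G.Adj a w := hadjz w
      (Finset.mem_insert_of_mem (Finset.mem_insert_self w _))
    have haN : a ∈ N := hNadj a hav hau haw
    have haz : a = z := by
      by_contra hc
      exact haSz (Finset.mem_insert_of_mem (Finset.mem_insert_of_mem
        (Finset.mem_erase.mpr ⟨hc, haN⟩)))
    subst haz
    -- neighborhood of z is exactly {u, w, v} ∪ (N \ {z})
    have hnbrz : G.neighborFinset a = insert u (insert w (insert v (N.erase a))) := by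
      symm
      apply Finset.eq_of_subset_of_card_le
      · intro y hy
        rw [G.mem_neighborFinset]
        rcases Finset.mem_insert.mp hy with rfl | hy2
        · exact hau
        rcases Finset.mem_insert.mp hy2 with rfl | hy3
        · exact haw
        rcases Finset.mem_insert.mp hy3 with rfl | hy4
        · exact (hAdj a hav).symm
        · exact hadjz y (Finset.mem_insert_of_mem (Finset.mem_insert_of_mem hy4))
      · have hvwNe : v ∉ insert w (insert v (N.erase a)) → True := fun _ => trivial
        have c1 : v ∉ N.erase a := fun hc => hNv (Finset.erase_subset a N hc)
        have c2 : w ∉ insert v (N.erase a) := by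
          rw [Finset.mem_insert]
          push_neg
          exact ⟨hwv, fun hc => hNw (Finset.erase_subset a N hc)⟩
        have c3 : u ∉ insert w (insert v (N.erase a)) := by
          rw [Finset.mem_insert, Finset.mem_insert]
          push_neg
          exact ⟨huw, huv, fun hc => hNu (Finset.erase_subset a N hc)⟩
        rw [Finset.card_insert_of_notMem c3, Finset.card_insert_of_notMem c2,
          Finset.card_insert_of_notMem c1, Finset.card_erase_of_mem hzN, hNcard']
        have := hDeg a hav
        omega
    -- final contradiction via S* = insert u N
    have hS2card : (insert u N).card = k - 1 := by
      rw [Finset.card_insert_of_notMem hNu, hNcard']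
      omega
    have hvS2 : v ∉ insert u N := by
      rw [Finset.mem_insert]
      push_neg
      exact ⟨Ne.symm huv, hNv⟩
    obtain ⟨b, hbS2, hbv, hbadj⟩ := hII _ hS2card hvS2
    have hbu : G.Adj b u := hbadj u (Finset.mem_insert_self u _)
    have hbz : G.Adj b a := hbadj a (Finset.mem_insert_of_mem hzN)
    have hbnbr : b ∈ G.neighborFinset a := (G.mem_neighborFinset a b).mpr hbz.symm
    rw [hnbrz] at hbnbr
    rcases Finset.mem_insert.mp hbnbr with rfl | hb2
    · exact absurd hbu (G.irrefl)
    rcases Finset.mem_insert.mp hb2 with rfl | hb3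
    · exact hna hbu.symm
    rcases Finset.mem_insert.mp hb3 with rfl | hb4
    · exact hbv rfl
    · exact hbS2 (Finset.mem_insert_of_mem (Finset.erase_subset a N hb4))
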